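/- Block efficiency of the Owen value: for any block G_k of the partition, the sum of Owen values of the players in G_k equals the (quotient-game) Shapley value of block k in the game v_Q defined on the index set {1,…,K} by v_Q(T) = v(∪_{m∈T} G_m); that is, ∑_{i ∈ G_k} φ_i^O = ∑_{T ⊆ {1..K}\{k}} [1/(K·C(K-1,|T|))]·(v_Q(T ∪ {k}) − v_Q(T)). -/

import Mathlib

private lemma nat_id1 {n s : ℕ} (hs : 1 ≤ s) (hn : s ≤ n) :
    n * (n - 1).choose (s - 1) = s * n.choose s := by
  have h1 : n - 1 + 1 = n := by omega
  have h2 : s - 1 + 1 = s := by omega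
  have h := Nat.add_one_mul_choose_eq (n - 1) (s - 1)
  rw [h1, h2] at h
  rw [h]
  exact Nat.mul_comm _ _

private lemma nat_id2 {n s : ℕ} (h : s < n) :
    n * (n - 1).choose s = (n - s) * n.choose s := by
  have h1 : (n - 1).choose s = (n - 1).choose (n - 1 - s) :=
    (Nat.choose_symm (by omega)).symm
  have h2 : n.choose s = n.choose (n - s) := (Nat.choose_symm (le_of_lt h)).symm
  have h3 := nat_id1 (s := n - s) (n := n) (by omega) (by omega)
  have h4 : n - s - 1 = n - 1 - s := by omega
  rw [h1, h2, ← h4, h3]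

private lemma shapley_eff {α : Type*} [DecidableEq α] (M : Finset α) (hM : M.Nonempty)
    (u : Finset α → ℝ) :
    ∑ i ∈ M, ∑ S ∈ (M.erase i).powerset,
        ((1 : ℝ) / (M.card * ((M.card - 1).choose S.card))) * (u (S ∪ {i}) - u S)
      = u M - u ∅ := by
  set n := M.card with hn
  have hn0 : 0 < n := Finset.card_pos.mpr hM
  set w : ℕ → ℝ := fun s => (1 : ℝ) / (n * ((n - 1).choose s)) with hw
  -- split into positive and negative parts
  have hsplit : ∑ i ∈ M, ∑ S ∈ (M.erase i).powerset, w S.card * (u (S ∪ {i}) - u S)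
      = (∑ i ∈ M, ∑ S ∈ (M.erase i).powerset, w S.card * u (S ∪ {i}))
        - ∑ i ∈ M, ∑ S ∈ (M.erase i).powerset, w S.card * u S := by
    rw [← Finset.sum_sub_distrib]
    refine Finset.sum_congr rfl fun i _ => ?_
    rw [← Finset.sum_sub_distrib]
    exact Finset.sum_congr rfl fun S _ => by ring
  have hP : (∑ i ∈ M, ∑ S ∈ (M.erase i).powerset, w S.card * u (S ∪ {i}))
      = ∑ A ∈ M.powerset, (A.card : ℝ) * (w (A.card - 1) * u A) := by
    have hconst : ∀ A ∈ M.powerset,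
        (A.card : ℝ) * (w (A.card - 1) * u A) = ∑ _i ∈ A, w (A.card - 1) * u A := by
      intro A _
      rw [Finset.sum_const, nsmul_eq_mul]
    rw [Finset.sum_congr rfl hconst, Finset.sum_sigma', Finset.sum_sigma']
    refine Finset.sum_bij' (fun x _ => ⟨x.2 ∪ {x.1}, x.1⟩)
      (fun y _ => ⟨y.2, y.1.erase y.2⟩) ?_ ?_ ?_ ?_ ?_
    · rintro ⟨i, S⟩ hx
      simp only [Finset.mem_sigma, Finset.mem_powerset] at hx ⊢
      obtain ⟨hi, hS⟩ := hx
      constructor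
      · exact Finset.union_subset (hS.trans (Finset.erase_subset _ _))
          (Finset.singleton_subset_iff.mpr hi)
      · exact Finset.mem_union_right _ (Finset.mem_singleton_self i)
    · rintro ⟨A, i⟩ hy
      simp only [Finset.mem_sigma, Finset.mem_powerset] at hy ⊢
      obtain ⟨hA, hi⟩ := hy
      exact ⟨hA hi, (Finset.erase_subset_erase i hA)⟩
    · rintro ⟨i, S⟩ hx
      simp only [Finset.mem_sigma, Finset.mem_powerset] at hx
      obtain ⟨hi, hS⟩ := hx
      have hiS : i ∉ S := fun h => (Finset.mem_erase.mp (hS h)).1 rfl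
      have : (S ∪ {i}).erase i = S := by
        rw [Finset.erase_union_distrib, Finset.erase_singleton,
          Finset.erase_eq_of_notMem hiS, Finset.union_empty]
      simp [this, hiS]
    · rintro ⟨A, i⟩ hy
      simp only [Finset.mem_sigma, Finset.mem_powerset] at hy
      obtain ⟨hA, hi⟩ := hy
      have : A.erase i ∪ {i} = A := by
        rw [Finset.union_comm, ← Finset.insert_eq, Finset.insert_erase hi]
      simp [this]
    · rintro ⟨i, S⟩ hx
      simp only [Finset.mem_sigma, Finset.mem_powerset] at hx
      obtain ⟨hi, hS⟩ := hx
      have hiS : i ∉ S := fun h => (Finset.mem_erase.mp (hS h)).1 rfl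
      have hcard : (S ∪ {i}).card = S.card + 1 := by
        rw [Finset.union_comm, ← Finset.insert_eq, Finset.card_insert_of_notMem hiS]
      simp [hcard, hiS]
  have hQ : (∑ i ∈ M, ∑ S ∈ (M.erase i).powerset, w S.card * u S)
      = ∑ A ∈ M.powerset, ((n - A.card : ℕ) : ℝ) * (w A.card * u A) := by
    have hconst : ∀ A ∈ M.powerset,
        ((n - A.card : ℕ) : ℝ) * (w A.card * u A) = ∑ _i ∈ M \ A, w A.card * u A := by
      intro A hA
      rw [Finset.sum_const, nsmul_eq_mul,
        Finset.card_sdiff_of_subset (Finset.mem_powerset.mp hA)]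
    rw [Finset.sum_congr rfl hconst, Finset.sum_sigma', Finset.sum_sigma']
    refine Finset.sum_bij' (fun x _ => ⟨x.2, x.1⟩) (fun y _ => ⟨y.2, y.1⟩) ?_ ?_ ?_ ?_ ?_
    · rintro ⟨i, S⟩ hx
      simp only [Finset.mem_sigma, Finset.mem_powerset, Finset.mem_sdiff] at hx ⊢
      obtain ⟨hi, hS⟩ := hx
      exact ⟨hS.trans (Finset.erase_subset _ _), hi,
        fun h => (Finset.mem_erase.mp (hS h)).1 rfl⟩
    · rintro ⟨A, i⟩ hy
      simp only [Finset.mem_sigma, Finset.mem_powerset, Finset.mem_sdiff] at hy ⊢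
      obtain ⟨hA, hi, hiA⟩ := hy
      exact ⟨hi, Finset.subset_erase.mpr ⟨hA, hiA⟩⟩
    · rintro ⟨i, S⟩ _; rfl
    · rintro ⟨A, i⟩ _; rfl
    · rintro ⟨i, S⟩ _; rfl
  rw [hsplit, hP, hQ, ← Finset.sum_sub_distrib]
  have key : ∀ A ∈ M.powerset,
      (A.card : ℝ) * (w (A.card - 1) * u A) - ((n - A.card : ℕ) : ℝ) * (w A.card * u A)
      = (if A = M then u M else 0) - (if A = ∅ then u ∅ else 0) := by
    intro A hA
    have hAM : A ⊆ M := Finset.mem_powerset.mp hA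
    have hsn : A.card ≤ n := Finset.card_le_card hAM
    by_cases h1 : A = M
    · subst h1
      have hMne : A ≠ ∅ := Finset.nonempty_iff_ne_empty.mp hM
      rw [if_pos rfl, if_neg hMne]
      have : n - A.card = 0 := by omega
      rw [← hn] at *
      rw [this]
      have hwv : w (n - 1) = 1 / n := by
        rw [hw]; simp [Nat.choose_self]
      rw [hwv]
      have : (n : ℝ) ≠ 0 := Nat.cast_ne_zero.mpr (by omega)
      field_simp
      simp
    · by_cases h2 : A = ∅
      · subst h2
        rw [if_neg h1, if_pos rfl]
        simp only [Finset.card_empty, Nat.cast_zero, zero_mul, Nat.sub_zero]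
        have hwv : w 0 = 1 / n := by rw [hw]; simp
        rw [hwv]
        have : (n : ℝ) ≠ 0 := Nat.cast_ne_zero.mpr (by omega)
        field_simp
      · rw [if_neg h1, if_neg h2]
        have hs1 : 1 ≤ A.card := Finset.card_pos.mpr (Finset.nonempty_iff_ne_empty.mpr h2)
        have hslt : A.card < n := Finset.card_lt_card (Finset.ssubset_iff_subset_ne.mpr ⟨hAM, h1⟩)
        set s := A.card with hscard
        have e1 : ((n * (n - 1).choose (s - 1) : ℕ) : ℝ) = ((s * n.choose s : ℕ) : ℝ) := by
          exact_mod_cast congrArg (Nat.cast : ℕ → ℝ) (nat_id1 hs1 hsn)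
        have e2 : ((n * (n - 1).choose s : ℕ) : ℝ) = (((n - s) * n.choose s : ℕ) : ℝ) := by
          exact_mod_cast congrArg (Nat.cast : ℕ → ℝ) (nat_id2 hslt)
        rw [Nat.cast_mul, Nat.cast_mul] at e1 e2
        have hC : ((n.choose s : ℕ) : ℝ) ≠ 0 :=
          Nat.cast_ne_zero.mpr (Nat.choose_pos hsn).ne'
        have hc1 : (((n - 1).choose (s - 1) : ℕ) : ℝ) ≠ 0 :=
          Nat.cast_ne_zero.mpr (Nat.choose_pos (by omega)).ne'
        have hc2 : (((n - 1).choose s : ℕ) : ℝ) ≠ 0 :=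
          Nat.cast_ne_zero.mpr (Nat.choose_pos (by omega)).ne'
        have hn0' : (n : ℝ) ≠ 0 := Nat.cast_ne_zero.mpr (by omega)
        have hs0 : (s : ℝ) ≠ 0 := Nat.cast_ne_zero.mpr (by omega)
        have hm0 : ((n - s : ℕ) : ℝ) ≠ 0 := Nat.cast_ne_zero.mpr (by omega)
        have hws1 : w (s - 1) = 1 / ((n : ℝ) * ((n - 1).choose (s - 1))) := rfl
        have hws2 : w s = 1 / ((n : ℝ) * ((n - 1).choose s)) := rfl
        have hscalar : (s : ℝ) * w (s - 1) = ((n - s : ℕ) : ℝ) * w s := by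
          rw [hws1, hws2, mul_one_div, mul_one_div, e1, e2, ← div_div, ← div_div,
            div_self hs0, div_self hm0]
        rw [← mul_assoc, ← mul_assoc, hscalar, sub_self]
        simp
  rw [Finset.sum_congr rfl key, Finset.sum_sub_distrib]
  rw [Finset.sum_ite_eq' M.powerset M (fun _ => u M),
    Finset.sum_ite_eq' M.powerset ∅ (fun _ => u ∅)]
  rw [if_pos (Finset.mem_powerset_self M), if_pos (Finset.empty_mem_powerset M)]

/-- Block efficiency of the Owen value: the Owen values of the players of a
block `G k` sum to the Shapley value of block `k` in the quotient game
`v_Q(T) = v(∪_{m ∈ T} G m)`. -/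
theorem owen_block_efficiency {α : Type*} [DecidableEq α]
    (N : Finset α) (v : Finset α → ℝ) (K : ℕ) (hK : 0 < K)
    (G : Fin K → Finset α)
    (hne : ∀ k, (G k).Nonempty)
    (hdisj : ∀ k k', k ≠ k' → Disjoint (G k) (G k'))
    (hcover : Finset.univ.biUnion G = N)
    (k : Fin K) :
    ∑ i ∈ G k,
      ∑ T ∈ (Finset.univ.erase k).powerset, ∑ S ∈ ((G k).erase i).powerset,
        ((1 : ℝ) / (K * (K - 1).choose T.card)) *
          ((1 : ℝ) / ((G k).card * ((G k).card - 1).choose S.card)) *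
          (v (T.biUnion G ∪ S ∪ {i}) - v (T.biUnion G ∪ S))
      = ∑ T ∈ (Finset.univ.erase k).powerset,
          ((1 : ℝ) / (K * (K - 1).choose T.card)) *
            (v ((insert k T).biUnion G) - v (T.biUnion G)) := by
  rw [Finset.sum_comm]
  refine Finset.sum_congr rfl fun T hT => ?_
  set B := T.biUnion G with hB
  have hins : (insert k T).biUnion G = B ∪ G k := by
    rw [Finset.biUnion_insert, Finset.union_comm]
  have hstep : ∀ i ∈ G k, ∑ S ∈ ((G k).erase i).powerset,
      ((1 : ℝ) / (K * (K - 1).choose T.card)) *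
        ((1 : ℝ) / ((G k).card * ((G k).card - 1).choose S.card)) *
        (v (B ∪ S ∪ {i}) - v (B ∪ S))
      = ((1 : ℝ) / (K * (K - 1).choose T.card)) *
        ∑ S ∈ ((G k).erase i).powerset,
          ((1 : ℝ) / ((G k).card * ((G k).card - 1).choose S.card)) *
          ((fun S => v (B ∪ S)) (S ∪ {i}) - (fun S => v (B ∪ S)) S) := by
    intro i _
    rw [Finset.mul_sum]
    refine Finset.sum_congr rfl fun S _ => ?_
    rw [mul_assoc]
    simp only []
    rw [Finset.union_assoc]
  rw [Finset.sum_congr rfl hstep, ← Finset.mul_sum,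
    shapley_eff (G k) (hne k) (fun S => v (B ∪ S)), hins]
  simp
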